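/- Parallel composition preserves counting-based leakage resilience: let t1 be a table over variables (p, k, r1) and t2 a table over (p, k, r2) with disjoint random columns r1 and r2. Define the count C_P(bp, bk, nodes, vals) as the number of random assignments under which the circuit's selected nodes take the given values. Suppose for all public inputs bp, all pairs of secret inputs bk, bk', and all selections of at most n nodes, the value-count distributions of t1 agree for bk and bk', and similarly for t2. Then for the parallel composition (which evaluates both circuits on shared inputs with independent randoms r1, r2) and any selection of at most n nodes total drawn from the union of the two circuits' nodes, the joint value-count distribution is independent of the secret input; indeed the count factorizes as the product of the component counts, so the composed circuit is n-leakage-resilient. -/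
import Mathlib


/-- The number of random assignments under which the selected nodes take the
given values, for a circuit modeled by its evaluation function. -/
def CCount {P K R Node ι : Type} [Fintype R] [DecidableEq R] [Fintype ι]
    (eval : (P → ZMod 2) → (K → ZMod 2) → (R → ZMod 2) → Node → ZMod 2)
    (bp : P → ZMod 2) (bk : K → ZMod 2) (α : ι → Node) (v : ι → ZMod 2) : ℕ :=
  ((Finset.univ : Finset (R → ZMod 2)).filter
    (fun br => ∀ i, eval bp bk br (α i) = v i)).card

/-- Parallel composition: shared public and secret inputs, disjoint randoms,
disjoint node sets, each side evaluated with its own randoms. -/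
def parEval {P K R1 R2 Node1 Node2 : Type}
    (eval1 : (P → ZMod 2) → (K → ZMod 2) → (R1 → ZMod 2) → Node1 → ZMod 2)
    (eval2 : (P → ZMod 2) → (K → ZMod 2) → (R2 → ZMod 2) → Node2 → ZMod 2) :
    (P → ZMod 2) → (K → ZMod 2) → (R1 ⊕ R2 → ZMod 2) → Node1 ⊕ Node2 → ZMod 2 :=
  fun bp bk br => Sum.elim (eval1 bp bk (br ∘ Sum.inl)) (eval2 bp bk (br ∘ Sum.inr))

/-- n-leakage-resilience: for any selection of at most n nodes, the joint
value-count distribution is independent of the secret input. -/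
def Resilient {P K R Node : Type} [Fintype R] [DecidableEq R] (n : ℕ)
    (eval : (P → ZMod 2) → (K → ZMod 2) → (R → ZMod 2) → Node → ZMod 2) : Prop :=
  ∀ (j : ℕ), j ≤ n → ∀ (bp : P → ZMod 2) (bk bk' : K → ZMod 2)
    (α : Fin j → Node) (v : Fin j → ZMod 2),
    CCount eval bp bk α v = CCount eval bp bk' α v

/-- parallel composition of n-leakage-resilient circuits with
disjoint randoms is n-leakage-resilient. -/
theorem parallel_composition_resilient {P K R1 R2 Node1 Node2 : Type}
    [Fintype R1] [DecidableEq R1] [Fintype R2] [DecidableEq R2] (n : ℕ)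
    (eval1 : (P → ZMod 2) → (K → ZMod 2) → (R1 → ZMod 2) → Node1 → ZMod 2)
    (eval2 : (P → ZMod 2) → (K → ZMod 2) → (R2 → ZMod 2) → Node2 → ZMod 2)
    (h1 : Resilient n eval1) (h2 : Resilient n eval2) :
    Resilient n (parEval eval1 eval2) := by
  intro j hj bp bk bk' α v
  classical
  let T1 := {i : Fin j // (α i).isLeft}
  let T2 := {i : Fin j // (α i).isRight}
  let c1 := Fintype.card T1
  let c2 := Fintype.card T2
  let e1 : Fin c1 ≃ T1 := (Fintype.equivFin T1).symm
  let e2 : Fin c2 ≃ T2 := (Fintype.equivFin T2).symm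
  let α1 : Fin c1 → Node1 := fun m => (α (e1 m).1).getLeft (e1 m).2
  let α2 : Fin c2 → Node2 := fun m => (α (e2 m).1).getRight (e2 m).2
  let v1 : Fin c1 → ZMod 2 := fun m => v (e1 m).1
  let v2 : Fin c2 → ZMod 2 := fun m => v (e2 m).1
  have hc1 : c1 ≤ j := by
    have := Fintype.card_subtype_le (fun i : Fin j => (α i).isLeft = true)
    simpa using this
  have hc2 : c2 ≤ j := by
    have := Fintype.card_subtype_le (fun i : Fin j => (α i).isRight = true)
    simpa using this
  have key : ∀ bk0 : K → ZMod 2, CCount (parEval eval1 eval2) bp bk0 α v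
      = CCount eval1 bp bk0 α1 v1 * CCount eval2 bp bk0 α2 v2 := by
    intro bk0
    unfold CCount
    rw [← Finset.card_product]
    apply Finset.card_bij' (fun br _ => (br ∘ Sum.inl, br ∘ Sum.inr))
      (fun pr _ => Sum.elim pr.1 pr.2)
    · intro br hbr
      simp only [Finset.mem_filter, Finset.mem_univ, true_and] at hbr ⊢
      rw [Finset.mem_product]
      constructor
      · simp only [Finset.mem_filter, Finset.mem_univ, true_and]
        intro m
        have h := hbr (e1 m).1
        have heq : α (e1 m).1 = Sum.inl (α1 m) := (Sum.eq_left_getLeft_of_isLeft (e1 m).2)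
        rw [heq] at h
        simpa [parEval] using h
      · simp only [Finset.mem_filter, Finset.mem_univ, true_and]
        intro m
        have h := hbr (e2 m).1
        have heq : α (e2 m).1 = Sum.inr (α2 m) := (Sum.eq_right_getRight_of_isRight (e2 m).2)
        rw [heq] at h
        simpa [parEval] using h
    · intro pr hpr
      rw [Finset.mem_product] at hpr
      obtain ⟨hp1, hp2⟩ := hpr
      simp only [Finset.mem_filter, Finset.mem_univ, true_and] at hp1 hp2 ⊢
      intro i
      cases hαi : α i with
      | inl a =>
          have hi : (α i).isLeft := by rw [hαi]; rfl
          have := hp1 (e1.symm ⟨i, hi⟩)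
          simp only [α1, v1, Equiv.apply_symm_apply] at this
          have ha : (α i).getLeft hi = a := by simp [hαi]
          rw [ha] at this
          simpa [parEval, hαi] using this
      | inr b =>
          have hi : (α i).isRight := by rw [hαi]; rfl
          have := hp2 (e2.symm ⟨i, hi⟩)
          simp only [α2, v2, Equiv.apply_symm_apply] at this
          have hb : (α i).getRight hi = b := by simp [hαi]
          rw [hb] at this
          simpa [parEval, hαi] using this
    · intro br _; ext x; cases x <;> rfl
    · intro pr _; ext x <;> rfl
  rw [key bk, key bk', h1 c1 (hc1.trans hj) bp bk bk' α1 v1,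
    h2 c2 (hc2.trans hj) bp bk bk' α2 v2]
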